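/- (Theorem 3: self-triggering lower bound.) Let Z : ℝ^(2n) → ℝ^(2n) be C^(p−1) and homogeneous of degree ξ > 0 with respect to the standard dilation, and let Γ : ℝ^(2n) → ℝ be C^p and homogeneous of degree ϑ ∈ ℝ. Let 𝓏 be a flow of Z satisfying the scaling property 𝓏(t, λ·z) = λ·𝓏(λ^ξ·t, z) for all λ > 0. Fix z ∈ ℝ^(2n) with Γ(z) < 0, coefficients χ₀, …, χ_{p−1} ∈ ℝ with χ_i ≥ 0 for i ≤ p−2 satisfying L_Z^p Γ ≤ Σ_{i=0}^{p−1} χ_i·L_Z^i Γ on a set M, a time t⋆ > 0, and λ > 0 such that: (i) the trajectory 𝓏(s, λ·z) remains in M for s ∈ [0, t⋆]; (ii) Σ_{i=0}^{p−1} β_i(t⋆, z)·λ^(ϑ + i·ξ) = 0, where β_i(t⋆, z) = (exp(A_p·t⋆))_{1,(i+1)}·L_Z^i Γ(z) (equivalently, q = λ^ξ is a root of Σ_{i=0}^{p−1} β_i(t⋆, z)·q^i = 0 and y₁(t⋆, μ^p(λ·z)) = 0); and (iii) y₁(s, μ^p(λ·z)) ≠ 0 for every s ∈ (0, t⋆).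 Then Γ(𝓏(t, z)) < 0 for all t ∈ [0, λ^ξ·t⋆); consequently the inter-execution time satisfies τ(z) ≥ τ↓(z) := λ^ξ·t⋆ = q·t⋆. -/

import Mathlib

open NormedSpace Nat

/-- The Lie derivative of `g` along the vector field `Z`: `L_Z g (z) = Dg(z) (Z z)`. -/
noncomputable def lieDeriv {E : Type*} [NormedAddCommGroup E] [NormedSpace ℝ E]
    (Z : E → E) (g : E → ℝ) : E → ℝ :=
  fun z => fderiv ℝ g z (Z z)

/-- Iterated Lie derivatives: `L_Z^0 g = g`, `L_Z^(k+1) g = L_Z (L_Z^k g)`. -/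
noncomputable def lieDerivIter {E : Type*} [NormedAddCommGroup E] [NormedSpace ℝ E]
    (Z : E → E) (g : E → ℝ) : ℕ → E → ℝ
  | 0 => g
  | k + 1 => lieDeriv Z (lieDerivIter Z g k)

/-- The `p × p` companion matrix with ones on the superdiagonal and last row
`(χ₀, χ₁, …, χ_{p-1})`. -/
def companionMatrix (p : ℕ) (χ : Fin p → ℝ) : Matrix (Fin p) (Fin p) ℝ :=
  Matrix.of fun i j =>
    if (i : ℕ) + 1 = p then χ j else if (j : ℕ) = (i : ℕ) + 1 then 1 else 0

section AuxLemmas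

variable {p : ℕ}

private lemma entry_nonneg_pow {B : Matrix (Fin p) (Fin p) ℝ}
    (hB : ∀ i j, 0 ≤ B i j) (n : ℕ) : ∀ i j, 0 ≤ (B ^ n) i j := by
  induction n with
  | zero =>
    intro i j
    rw [pow_zero]
    by_cases h : i = j <;> simp [Matrix.one_apply, h]
  | succ n ih =>
    intro i j
    rw [pow_succ, Matrix.mul_apply]
    exact Finset.sum_nonneg fun k _ => mul_nonneg (ih i k) (hB k j)

private lemma exp_entry_nonneg {B : Matrix (Fin p) (Fin p) ℝ}
    (hB : ∀ i j, 0 ≤ B i j) (i j : Fin p) : 0 ≤ exp B i j := by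
  letI : SeminormedRing (Matrix (Fin p) (Fin p) ℝ) := Matrix.linftyOpSemiNormedRing
  letI : NormedRing (Matrix (Fin p) (Fin p) ℝ) := Matrix.linftyOpNormedRing
  letI : NormedAlgebra ℝ (Matrix (Fin p) (Fin p) ℝ) := Matrix.linftyOpNormedAlgebra
  have hsum : HasSum (fun n : ℕ => (n !⁻¹ : ℝ) • B ^ n) (exp B) := by
    rw [exp_eq_tsum ℝ]
    exact (expSeries_summable' (𝕂 := ℝ) B).hasSum
  have h1 : HasSum (fun n : ℕ => ((n !⁻¹ : ℝ) • B ^ n) i j) (exp B i j) :=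
    Pi.hasSum.mp (Pi.hasSum.mp hsum i) j
  rw [← h1.tsum_eq]
  refine tsum_nonneg fun n => ?_
  have : ((n !⁻¹ : ℝ) • B ^ n) i j = (n !⁻¹ : ℝ) * (B ^ n) i j := rfl
  rw [this]
  exact mul_nonneg (by positivity) (entry_nonneg_pow hB n i j)

private lemma smul_one_eq_diag (a : ℝ) :
    a • (1 : Matrix (Fin p) (Fin p) ℝ) = Matrix.diagonal (fun _ => a) := by
  ext i j
  by_cases h : i = j <;> simp [Matrix.one_apply, Matrix.diagonal_apply, h]

private lemma exp_smul_one (a : ℝ) :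
    exp (a • (1 : Matrix (Fin p) (Fin p) ℝ)) = Matrix.diagonal (fun _ => Real.exp a) := by
  rw [smul_one_eq_diag, Matrix.exp_diagonal]
  have : exp (fun _ => a : Fin p → ℝ) = fun _ => Real.exp a := by
    rw [Pi.exp_def, ← Real.exp_eq_exp_ℝ]
  rw [this]

private lemma metzler_exp_entry_nonneg (hp : 0 < p) (χ : Fin p → ℝ)
    (hχ : ∀ i : Fin p, (i : ℕ) + 1 < p → 0 ≤ χ i) {r : ℝ} (hr : 0 ≤ r) (i j : Fin p) :
    0 ≤ exp (r • companionMatrix p χ) i j := by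
  set lastI : Fin p := ⟨p - 1, by omega⟩ with hlastI
  set c : ℝ := max 0 (-(χ lastI)) with hc
  have hc0 : 0 ≤ c := le_max_left _ _
  set B : Matrix (Fin p) (Fin p) ℝ := companionMatrix p χ + c • 1 with hB
  have hBnn : ∀ a b, 0 ≤ B a b := by
    intro a b
    have : B a b = (if (a : ℕ) + 1 = p then χ b else if (b : ℕ) = (a : ℕ) + 1 then 1 else 0)
        + c * (if a = b then 1 else 0) := by
      simp [hB, companionMatrix, Matrix.one_apply, Matrix.add_apply]
    rw [this]
    by_cases hap : (a : ℕ) + 1 = p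
    · by_cases hab : a = b
      · subst hab
        have hbl : a = lastI := by
          apply Fin.ext; simp [hlastI]; omega
        simp only [hap, if_true, if_pos rfl, mul_one]
        have h3 : -(χ lastI) ≤ c := le_max_right _ _
        rw [hbl]
        linarith
      · have hb : (b : ℕ) + 1 < p := by
          rcases lt_or_ge ((b : ℕ) + 1) p with h | h
          · exact h
          · exfalso
            have : (b : ℕ) < p := b.isLt
            have : (b : ℕ) = (a : ℕ) := by omega
            exact hab (Fin.ext (by omega))
        simp [hap, hab]
        exact hχ b hb
    · have h1 : (0:ℝ) ≤ if (b : ℕ) = (a : ℕ) + 1 then 1 else 0 := by positivity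
      have h2 : (0:ℝ) ≤ c * (if a = b then 1 else 0) := by positivity
      simp only [hap, if_false]
      linarith
  have hsplit : r • companionMatrix p χ
      = (-(r * c)) • (1 : Matrix (Fin p) (Fin p) ℝ) + r • B := by
    rw [hB]
    module
  have hcomm : Commute ((-(r * c)) • (1 : Matrix (Fin p) (Fin p) ℝ)) (r • B) :=
    ((Commute.one_left B).smul_left _).smul_right _
  rw [hsplit, Matrix.exp_add_of_commute _ _ hcomm, exp_smul_one]
  rw [Matrix.diagonal_mul]
  have hrB : ∀ a b, 0 ≤ (r • B) a b := by
    intro a b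
    have : (r • B) a b = r * B a b := rfl
    rw [this]; exact mul_nonneg hr (hBnn a b)
  exact mul_nonneg (Real.exp_pos _).le (exp_entry_nonneg hrB i j)

private lemma exp_entry_hasDerivAt (A : Matrix (Fin p) (Fin p) ℝ) (i j : Fin p) (s : ℝ) :
    HasDerivAt (fun u : ℝ => exp (u • A) i j) ((A * exp (s • A)) i j) s := by
  letI : SeminormedRing (Matrix (Fin p) (Fin p) ℝ) := Matrix.linftyOpSemiNormedRing
  letI : NormedRing (Matrix (Fin p) (Fin p) ℝ) := Matrix.linftyOpNormedRing
  letI : NormedAlgebra ℝ (Matrix (Fin p) (Fin p) ℝ) := Matrix.linftyOpNormedAlgebra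
  have h : HasDerivAt (fun u : ℝ => exp (u • A)) (A * exp (s • A)) s :=
    hasDerivAt_exp_smul_const' (𝕂 := ℝ) A s
  let L : Matrix (Fin p) (Fin p) ℝ →ₗ[ℝ] ℝ :=
    { toFun := fun M => M i j, map_add' := fun _ _ => rfl, map_smul' := fun _ _ => rfl }
  exact (LinearMap.toContinuousLinearMap L).hasFDerivAt.comp_hasDerivAt s h

private lemma exp_commute (A : Matrix (Fin p) (Fin p) ℝ) (u : ℝ) :
    A * exp (u • A) = exp (u • A) * A :=
  ((Commute.refl A).smul_right u).exp_right

private lemma lieDerivIter_contDiff {d : ℕ} {Z : (Fin d → ℝ) → Fin d → ℝ} {Γ : (Fin d → ℝ) → ℝ}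
    (hZ : ContDiff ℝ ((p - 1 : ℕ) : ℕ∞) Z) (hΓ : ContDiff ℝ ((p : ℕ) : ℕ∞) Γ) :
    ∀ i, i ≤ p → ContDiff ℝ ((p - i : ℕ) : ℕ∞) (lieDerivIter Z Γ i) := by
  intro i
  induction i with
  | zero => intro _; simpa [lieDerivIter] using hΓ
  | succ i ih =>
    intro hip
    have hi : i ≤ p := by omega
    have hf := ih hi
    have hcast : ((p - i : ℕ) : ℕ∞) = ((p - (i + 1) : ℕ) : ℕ∞) + 1 := by
      have : p - i = (p - (i + 1)) + 1 := by omega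
      rw [this]; push_cast; ring
    have hfd : ContDiff ℝ ((p - (i + 1) : ℕ) : ℕ∞) (fderiv ℝ (lieDerivIter Z Γ i)) :=
      hf.fderiv_right (by exact_mod_cast hcast.symm.le)
    have hZ' : ContDiff ℝ ((p - (i + 1) : ℕ) : ℕ∞) Z :=
      hZ.of_le (by exact_mod_cast Nat.sub_le_sub_left (by omega : 1 ≤ i + 1) p)
    exact hfd.clm_apply hZ'

private lemma companion_mulVec_last (χ : Fin p → ℝ) (v : Fin p → ℝ) {j : Fin p}
    (h : (j : ℕ) + 1 = p) :
    (companionMatrix p χ).mulVec v j = ∑ k, χ k * v k := by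
  simp [Matrix.mulVec, dotProduct, companionMatrix, h]

private lemma companion_mulVec_mid (χ : Fin p → ℝ) (v : Fin p → ℝ) {j : Fin p}
    (h : (j : ℕ) + 1 < p) :
    (companionMatrix p χ).mulVec v j = v ⟨(j : ℕ) + 1, h⟩ := by
  have hne : ¬((j : ℕ) + 1 = p) := by omega
  simp only [Matrix.mulVec, dotProduct, companionMatrix, Matrix.of_apply, hne, if_false]
  rw [Finset.sum_eq_single (⟨(j : ℕ) + 1, h⟩ : Fin p)]
  · simp
  · intro k _ hk
    have : ¬((k : ℕ) = (j : ℕ) + 1) := fun hc => hk (Fin.ext (by simpa using hc))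
    simp [this]
  · simp

end AuxLemmas

/-- Theorem 3 (self-triggering lower bound).  Let `Z` be `C^(p-1)` and homogeneous of
degree `ξ > 0`, `Γ` be `C^p` and homogeneous of degree `ϑ`, and let `𝓏` be the flow of
`Z` with the homogeneity scaling property.  Fix `z` with `Γ z < 0`, coefficients
`χ_i` (`χ_i ≥ 0` for `i ≤ p - 2`) satisfying `L_Z^p Γ ≤ Σ_i χ_i L_Z^i Γ` on `M`,
`t⋆ > 0` and `l > 0` such that (i) the trajectory of `l • z` stays in `M` on
`[0, t⋆]`, (ii) `Σ_i β_i(t⋆, z) l^(ϑ + i ξ) = 0` (i.e. `y₁(t⋆, μ^p(l • z)) = 0`), and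
(iii) `y₁(s, μ^p(l • z)) ≠ 0` for `s ∈ (0, t⋆)`.  Then `Γ (𝓏 t z) < 0` for all
`t ∈ [0, l^ξ t⋆)`, so the inter-execution time of `z` is at least
`τ↓(z) = l^ξ t⋆`. -/
theorem self_triggering_lower_bound {d p : ℕ} (hp : 0 < p)
    (Z : (Fin d → ℝ) → (Fin d → ℝ)) (Γ : (Fin d → ℝ) → ℝ) (ξ ϑ : ℝ) (hξ : 0 < ξ)
    (hZsmooth : ContDiff ℝ ((p - 1 : ℕ) : ℕ∞) Z)
    (hΓsmooth : ContDiff ℝ ((p : ℕ) : ℕ∞) Γ)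
    (hZhom : ∀ l : ℝ, 0 < l → ∀ z : Fin d → ℝ, Z (l • z) = l ^ (ξ + 1) • Z z)
    (hΓhom : ∀ l : ℝ, 0 < l → ∀ z : Fin d → ℝ, Γ (l • z) = l ^ ϑ * Γ z)
    (𝓏 : ℝ → (Fin d → ℝ) → (Fin d → ℝ))
    (h𝓏0 : ∀ z : Fin d → ℝ, 𝓏 0 z = z)
    (h𝓏deriv : ∀ (z : Fin d → ℝ) (t : ℝ), HasDerivAt (fun s => 𝓏 s z) (Z (𝓏 t z)) t)
    (hscale : ∀ l : ℝ, 0 < l → ∀ (t : ℝ) (z : Fin d → ℝ),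
      𝓏 t (l • z) = l • 𝓏 (l ^ ξ * t) z)
    (z : Fin d → ℝ) (hΓz : Γ z < 0)
    (M : Set (Fin d → ℝ))
    (χ : Fin p → ℝ) (hχ : ∀ i : Fin p, (i : ℕ) + 1 < p → 0 ≤ χ i)
    (hineq : ∀ y ∈ M, lieDerivIter Z Γ p y ≤ ∑ i : Fin p, χ i * lieDerivIter Z Γ i y)
    (tstar : ℝ) (htstar : 0 < tstar) (l : ℝ) (hl : 0 < l)
    (hM : ∀ s ∈ Set.Icc (0 : ℝ) tstar, 𝓏 s (l • z) ∈ M)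
    (hroot : ∑ i : Fin p,
      (NormedSpace.exp (tstar • companionMatrix p χ) ⟨0, hp⟩ i *
          lieDerivIter Z Γ i z) * l ^ (ϑ + (i : ℝ) * ξ) = 0)
    (hnozero : ∀ s ∈ Set.Ioo (0 : ℝ) tstar,
      (NormedSpace.exp (s • companionMatrix p χ)).mulVec
          (fun i : Fin p => lieDerivIter Z Γ i (l • z)) ⟨0, hp⟩ ≠ 0) :
    (∀ t ∈ Set.Ico (0 : ℝ) (l ^ ξ * tstar), Γ (𝓏 t z) < 0) ∧
      (∀ t : ℝ, 0 < t → Γ (𝓏 t z) = 0 → l ^ ξ * tstar ≤ t) ∧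
      ({t : ℝ | 0 < t ∧ Γ (𝓏 t z) = 0}.Nonempty →
        l ^ ξ * tstar ≤ sInf {t : ℝ | 0 < t ∧ Γ (𝓏 t z) = 0}) := by
  classical
  set Al := companionMatrix p χ with hAl
  set w := l • z with hw
  set lastI : Fin p := ⟨p - 1, by omega⟩ with hlastI
  have hlast1 : (lastI : ℕ) + 1 = p := by simp [hlastI]; omega
  set zIdx : Fin p := ⟨0, hp⟩ with hzIdx
  -- flow
  have hflowdiff : ∀ s : ℝ, HasDerivAt (fun u => 𝓏 u w) (Z (𝓏 s w)) s := fun s => h𝓏deriv w s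
  have hflowcont : Continuous fun s => 𝓏 s w :=
    continuous_iff_continuousAt.mpr fun s => (hflowdiff s).continuousAt
  have hsmooth := lieDerivIter_contDiff (p := p) hZsmooth hΓsmooth
  set g : ℕ → ℝ → ℝ := fun i s => lieDerivIter Z Γ i (𝓏 s w) with hgdef
  have hgcont : ∀ i, i ≤ p → Continuous (g i) := fun i hi =>
    ((hsmooth i hi).continuous).comp hflowcont
  have hgderiv : ∀ i, i < p → ∀ s : ℝ, HasDerivAt (g i) (g (i + 1) s) s := by
    intro i hi s
    have hdiff : DifferentiableAt ℝ (lieDerivIter Z Γ i) (𝓏 s w) :=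
      ((hsmooth i (by omega)).differentiable
        (by exact_mod_cast (by omega : p - i ≠ 0))).differentiableAt
    exact hdiff.hasFDerivAt.comp_hasDerivAt s (hflowdiff s)
  -- mu and y
  set μ : Fin p → ℝ := fun i : Fin p => lieDerivIter Z Γ (i : ℕ) w with hμ
  set y : ℝ → Fin p → ℝ := fun s => (exp (s • Al)).mulVec μ with hy
  have hyval : ∀ (s : ℝ) (j : Fin p), y s j = ∑ k, exp (s • Al) j k * μ k := by
    intro s j; simp [hy, Matrix.mulVec, dotProduct]
  have hyderiv : ∀ (j : Fin p) (s : ℝ), HasDerivAt (fun u => y u j) (Al.mulVec (y s) j) s := by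
    intro j s
    have h1 : HasDerivAt (fun u => ∑ k, exp (u • Al) j k * μ k)
        (∑ k, (Al * exp (s • Al)) j k * μ k) s :=
      HasDerivAt.fun_sum fun k _ => (exp_entry_hasDerivAt Al j k s).mul_const (μ k)
    have h2 : (∑ k, (Al * exp (s • Al)) j k * μ k) = Al.mulVec (y s) j := by
      have : y s = (exp (s • Al)).mulVec μ := rfl
      rw [this, Matrix.mulVec_mulVec]
      simp [Matrix.mulVec, dotProduct]
    have h3 : (fun u => y u j) = fun u => ∑ k, exp (u • Al) j k * μ k :=
      funext fun u => hyval u j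
    rw [h3, ← h2]
    exact h1
  have hycont : ∀ j : Fin p, Continuous fun s => y s j :=
    fun j => continuous_iff_continuousAt.mpr fun s => (hyderiv j s).continuousAt
  -- e
  set e : ℝ → ℝ := fun s => (∑ k : Fin p, χ k * g (k : ℕ) s) - g p s with he
  have hecont : Continuous e := by
    apply Continuous.sub
    · exact continuous_finset_sum _ fun k _ => continuous_const.mul (hgcont k k.isLt.le)
    · exact hgcont p le_rfl
  have henonneg : ∀ s ∈ Set.Icc (0 : ℝ) tstar, 0 ≤ e s := by
    intro s hs
    have h1 := hineq (𝓏 s w) (by rw [hw]; exact hM s hs)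
    simp only [he, hgdef]
    linarith
  -- delta
  set δ : ℝ → Fin p → ℝ := fun s j => y s j - g (j : ℕ) s with hδ
  have hδderiv : ∀ (j : Fin p) (s : ℝ),
      HasDerivAt (fun u => δ u j) (Al.mulVec (y s) j - g ((j : ℕ) + 1) s) s := by
    intro j s
    exact (hyderiv j s).sub (hgderiv j j.isLt s)
  have hδ0 : ∀ j : Fin p, δ 0 j = 0 := by
    intro j
    have h1 : y 0 j = μ j := by
      have : y 0 = μ := by
        show (exp ((0:ℝ) • Al)).mulVec μ = μ
        rw [zero_smul, exp_zero, Matrix.one_mulVec]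
      rw [this]
    have h2 : g (j : ℕ) 0 = μ j := by
      rw [hgdef, hμ]; simp [h𝓏0, hw]
    simp [hδ, h1, h2]
  -- key identity
  have hkey : ∀ (s : ℝ) (j : Fin p),
      (Al.mulVec (y s) j - g ((j : ℕ) + 1) s) - Al.mulVec (δ s) j
        = if j = lastI then e s else 0 := by
    intro s j
    by_cases hj : (j : ℕ) + 1 = p
    · have hjl : j = lastI := Fin.ext (by simp [hlastI]; omega)
      rw [if_pos hjl]
      rw [hAl, companion_mulVec_last χ (y s) hj, companion_mulVec_last χ (δ s) hj]
      have hgp : g ((j : ℕ) + 1) s = g p s := by rw [hj]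
      rw [hgp, he]
      have : ∑ k, χ k * δ s k = (∑ k, χ k * y s k) - ∑ k : Fin p, χ k * g (k : ℕ) s := by
        rw [← Finset.sum_sub_distrib]
        congr 1; funext k; rw [hδ]; ring
      rw [this]; ring
    · have hjlt : (j : ℕ) + 1 < p := by omega
      rw [if_neg (by intro hc; rw [hc] at hj; exact hj hlast1)]
      rw [hAl, companion_mulVec_mid χ (y s) hjlt, companion_mulVec_mid χ (δ s) hjlt]
      have : δ s ⟨(j : ℕ) + 1, hjlt⟩ = y s ⟨(j : ℕ) + 1, hjlt⟩ - g ((j : ℕ) + 1) s := rfl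
      rw [this]; ring
  -- W and its derivative
  set W : Fin p → ℝ → ℝ := fun i u => ∑ j, exp ((-u) • Al) i j * δ u j with hWdef
  have hEderiv : ∀ (i j : Fin p) (s : ℝ),
      HasDerivAt (fun u : ℝ => exp ((-u) • Al) i j) (-((Al * exp ((-s) • Al)) i j)) s := by
    intro i j s
    have h1 := exp_entry_hasDerivAt Al i j (-s)
    have h2 : HasDerivAt (fun u : ℝ => -u) (-1) s := (hasDerivAt_id s).neg
    have h3 := h1.comp s h2
    simpa [Function.comp_def, neg_smul, mul_comm] using h3
  have hWderiv : ∀ (i : Fin p) (s : ℝ),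
      HasDerivAt (W i) (exp ((-s) • Al) i lastI * e s) s := by
    intro i s
    have h1 : HasDerivAt (fun u => ∑ j, exp ((-u) • Al) i j * δ u j)
        (∑ j, (-((Al * exp ((-s) • Al)) i j) * δ s j
            + exp ((-s) • Al) i j * (Al.mulVec (y s) j - g ((j : ℕ) + 1) s))) s :=
      HasDerivAt.fun_sum fun j _ => (hEderiv i j s).mul (hδderiv j s)
    have hsum1 : ∑ j, (Al * exp ((-s) • Al)) i j * δ s j
        = ∑ j, exp ((-s) • Al) i j * Al.mulVec (δ s) j := by
      rw [exp_commute]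
      calc ∑ j, (exp ((-s) • Al) * Al) i j * δ s j
          = ((exp ((-s) • Al) * Al).mulVec (δ s)) i := by
            simp [Matrix.mulVec, dotProduct]
        _ = (exp ((-s) • Al)).mulVec (Al.mulVec (δ s)) i := by
            rw [Matrix.mulVec_mulVec]
        _ = ∑ j, exp ((-s) • Al) i j * Al.mulVec (δ s) j := by
            simp [Matrix.mulVec, dotProduct]
    have h2 : (∑ j, (-((Al * exp ((-s) • Al)) i j) * δ s j
            + exp ((-s) • Al) i j * (Al.mulVec (y s) j - g ((j : ℕ) + 1) s)))
        = exp ((-s) • Al) i lastI * e s := by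
      have step1 : (∑ j, (-((Al * exp ((-s) • Al)) i j) * δ s j
            + exp ((-s) • Al) i j * (Al.mulVec (y s) j - g ((j : ℕ) + 1) s)))
          = (∑ j, exp ((-s) • Al) i j * (Al.mulVec (y s) j - g ((j : ℕ) + 1) s))
            - ∑ j, (Al * exp ((-s) • Al)) i j * δ s j := by
        rw [← Finset.sum_sub_distrib]
        congr 1; funext j; ring
      rw [step1, hsum1, ← Finset.sum_sub_distrib]
      have step2 : ∀ j : Fin p,
          exp ((-s) • Al) i j * (Al.mulVec (y s) j - g ((j : ℕ) + 1) s)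
            - exp ((-s) • Al) i j * Al.mulVec (δ s) j
          = exp ((-s) • Al) i j * (if j = lastI then e s else 0) := by
        intro j
        rw [← mul_sub, hkey s j]
      rw [Finset.sum_congr rfl fun j _ => step2 j]
      simp [Finset.sum_ite_eq', mul_ite, mul_zero]
    rw [hWdef, ← h2]
    exact h1
  have hWcont' : ∀ i : Fin p, Continuous fun s => exp ((-s) • Al) i lastI * e s := by
    intro i
    apply Continuous.mul _ hecont
    exact continuous_iff_continuousAt.mpr fun s => (hEderiv i lastI s).continuousAt
  have hW0 : ∀ i : Fin p, W i 0 = 0 := by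
    intro i
    rw [hWdef]
    simp only
    rw [Finset.sum_eq_zero]
    intro j _
    rw [hδ0 j, mul_zero]
  have hWt : ∀ (i : Fin p) (t : ℝ),
      W i t = ∫ s in (0:ℝ)..t, exp ((-s) • Al) i lastI * e s := by
    intro i t
    have h1 := intervalIntegral.integral_eq_sub_of_hasDerivAt
      (f := W i) (f' := fun s => exp ((-s) • Al) i lastI * e s)
      (fun s _ => hWderiv i s) ((hWcont' i).intervalIntegrable 0 t)
    rw [h1, hW0 i, sub_zero]
  -- delta nonneg on [0, tstar]
  have hδnonneg : ∀ t ∈ Set.Icc (0 : ℝ) tstar, 0 ≤ δ t zIdx := by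
    intro t ht
    have hexp1 : exp (t • Al) * exp ((-t) • Al) = 1 := by
      rw [← Matrix.exp_add_of_commute _ _ (((Commute.refl Al).smul_left t).smul_right (-t))]
      have : t • Al + (-t) • Al = 0 := by module
      rw [this, exp_zero]
    have hrec : δ t zIdx = ∑ i, exp (t • Al) zIdx i * W i t := by
      have h5 : (exp (t • Al)).mulVec (fun i => W i t) = δ t := by
        have h6 : (fun i => W i t) = (exp ((-t) • Al)).mulVec (δ t) := by
          funext i
          rw [hWdef]
          simp [Matrix.mulVec, dotProduct]
        rw [h6, Matrix.mulVec_mulVec, hexp1, Matrix.one_mulVec]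
      conv_lhs => rw [← h5]
      simp [Matrix.mulVec, dotProduct]
    rw [hrec]
    have hint : ∀ i : Fin p,
        IntervalIntegrable (fun s => exp ((-s) • Al) i lastI * e s)
          MeasureTheory.volume 0 t := fun i => (hWcont' i).intervalIntegrable 0 t
    have step1 : ∑ i, exp (t • Al) zIdx i * W i t
        = ∫ s in (0:ℝ)..t, ∑ i, exp (t • Al) zIdx i
            * (exp ((-s) • Al) i lastI * e s) := by
      rw [intervalIntegral.integral_finset_sum]
      · congr 1; funext i
        rw [hWt i t, ← intervalIntegral.integral_const_mul]
      · intro i _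
        exact (hint i).const_mul _
    rw [step1]
    apply intervalIntegral.integral_nonneg ht.1
    intro s hs
    have hsum2 : ∑ i, exp (t • Al) zIdx i * (exp ((-s) • Al) i lastI * e s)
        = (exp (t • Al) * exp ((-s) • Al)) zIdx lastI * e s := by
      rw [Matrix.mul_apply, Finset.sum_mul]
      congr 1; funext i; ring
    rw [hsum2]
    have hprod : exp (t • Al) * exp ((-s) • Al) = exp ((t - s) • Al) := by
      rw [← Matrix.exp_add_of_commute _ _ (((Commute.refl Al).smul_left t).smul_right (-s))]
      congr 1; module
    rw [hprod]
    have hts : (0:ℝ) ≤ t - s := by linarith [hs.2]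
    refine mul_nonneg ?_ (henonneg s ⟨hs.1, le_trans hs.2 ht.2⟩)
    rw [hAl]
    exact metzler_exp_entry_nonneg hp χ hχ hts zIdx lastI
  -- negativity of y on [0, tstar)
  have hΓw : Γ w < 0 := by
    rw [hw, hΓhom l hl z]
    exact mul_neg_of_pos_of_neg (Real.rpow_pos_of_pos hl ϑ) hΓz
  have hy00 : y 0 zIdx = Γ w := by
    have h1 : y 0 = μ := by
      show (exp ((0:ℝ) • Al)).mulVec μ = μ
      rw [zero_smul, exp_zero, Matrix.one_mulVec]
    rw [h1]
    rfl
  have hnz : ∀ s ∈ Set.Ioo (0 : ℝ) tstar, y s zIdx ≠ 0 := by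
    intro s hs
    have := hnozero s hs
    simpa [hy, hμ, hAl, hw, hzIdx] using this
  have hyneg : ∀ s ∈ Set.Ico (0 : ℝ) tstar, y s zIdx < 0 := by
    intro s hs
    rcases eq_or_lt_of_le hs.1 with h0 | h0
    · rw [← h0, hy00]; exact hΓw
    · by_contra hge
      push_neg at hge
      have hne0 := hnz s ⟨h0, hs.2⟩
      have hpos : 0 < y s zIdx := lt_of_le_of_ne hge (Ne.symm hne0)
      have hconts : ContinuousOn (fun u => y u zIdx) (Set.Icc 0 s) :=
        (hycont zIdx).continuousOn
      have hmem : (0 : ℝ) ∈ Set.Ioo (y 0 zIdx) (y s zIdx) := ⟨by rw [hy00]; exact hΓw, hpos⟩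
      obtain ⟨c, hc, hc0⟩ := intermediate_value_Ioo h0.le hconts hmem
      exact hnz c ⟨hc.1, lt_trans hc.2 hs.2⟩ hc0
  -- trajectory negativity from w
  have hneg' : ∀ s ∈ Set.Ico (0 : ℝ) tstar, Γ (𝓏 s w) < 0 := by
    intro s hs
    have h1 := hδnonneg s ⟨hs.1, hs.2.le⟩
    have h2 := hyneg s hs
    have h3 : g 0 s ≤ y s zIdx := by
      have : δ s zIdx = y s zIdx - g ((zIdx : ℕ)) s := rfl
      rw [this] at h1
      have hz0 : ((zIdx : Fin p) : ℕ) = 0 := rfl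
      rw [hz0] at h1
      linarith
    have hgs : g 0 s = Γ (𝓏 s w) := rfl
    linarith
  have hlx : (0 : ℝ) < l ^ ξ := Real.rpow_pos_of_pos hl ξ
  have main : ∀ t ∈ Set.Ico (0 : ℝ) (l ^ ξ * tstar), Γ (𝓏 t z) < 0 := by
    intro t ht
    have hs0 : 0 ≤ t / l ^ ξ := div_nonneg ht.1 hlx.le
    have hslt : t / l ^ ξ < tstar := by
      rw [div_lt_iff₀ hlx]
      calc t < l ^ ξ * tstar := ht.2
        _ = tstar * l ^ ξ := by ring
    have hts : l ^ ξ * (t / l ^ ξ) = t := by field_simp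
    have h3 := hneg' (t / l ^ ξ) ⟨hs0, hslt⟩
    rw [hw, hscale l hl _ z, hts, hΓhom l hl] at h3
    have hϑpos : (0 : ℝ) < l ^ ϑ := Real.rpow_pos_of_pos hl ϑ
    nlinarith
  refine ⟨main, ?_, ?_⟩
  · intro t ht h0
    by_contra hlt
    push_neg at hlt
    exact absurd h0 (ne_of_lt (main t ⟨ht.le, hlt⟩))
  · intro hne
    refine le_csInf hne ?_
    rintro b ⟨hb0, hbz⟩
    by_contra hlt
    push_neg at hlt
    exact absurd hbz (ne_of_lt (main b ⟨hb0.le, hlt⟩))
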